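/- Let k_p, k_i, k_s > 0. For every real s, sup_{r∈ℝ} { k_p·r·(2s − k_i·r − k_s·sgn(r)) } = k_p·(max(|2s| − k_s, 0))² / (4·k_i). -/

import Mathlib

theorem stmt_12 (kp ki ks : ℝ) (hkp : 0 < kp) (hki : 0 < ki) (hks : 0 < ks) (s : ℝ) :
    (⨆ r : ℝ, kp * r * (2 * s - ki * r - ks * Real.sign r))
      = kp * (max (|2 * s| - ks) 0) ^ 2 / (4 * ki) := by
  set c := max (|2 * s| - ks) 0 with hc
  have hc0 : 0 ≤ c := le_max_right _ _
  have key : ∀ r : ℝ, kp * r * (2 * s - ki * r - ks * Real.sign r) ≤ kp * c ^ 2 / (4 * ki) := by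
    intro r
    rw [le_div_iff₀ (by positivity : (0:ℝ) < 4 * ki)]
    rcases lt_trichotomy r 0 with h | h | h
    · rw [Real.sign_of_neg h]
      have h1 : -(2 * s) - ks ≤ c := le_max_of_le_left (by nlinarith [neg_le_abs (2 * s)])
      nlinarith [sq_nonneg (2 * ki * r + c), mul_pos hkp hki,
        mul_nonneg (mul_nonneg hkp.le (neg_nonneg.2 h.le)) (sub_nonneg.2 h1), hc0]
    · subst h; simp; positivity
    · rw [Real.sign_of_pos h]
      have h1 : 2 * s - ks ≤ c := le_max_of_le_left (by nlinarith [le_abs_self (2 * s)])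
      nlinarith [sq_nonneg (2 * ki * r - c), mul_pos hkp hki,
        mul_nonneg (mul_nonneg hkp.le h.le) (sub_nonneg.2 h1), hc0]
  have hbdd : BddAbove (Set.range fun r : ℝ => kp * r * (2 * s - ki * r - ks * Real.sign r)) :=
    ⟨_, Set.forall_mem_range.2 key⟩
  refine le_antisymm (ciSup_le key) ?_
  by_cases hcase : |2 * s| ≤ ks
  · have hc0' : c = 0 := by rw [hc]; exact max_eq_right (sub_nonpos.2 hcase)
    rw [hc0']
    simpa using le_ciSup hbdd 0
  · push_neg at hcase
    have hc' : c = |2 * s| - ks := max_eq_left (by linarith)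
    have hcpos : 0 < c := by rw [hc']; linarith
    have hslt : 2 * s ≠ 0 := by intro h0; rw [h0, abs_zero] at hcase; linarith
    rcases hslt.lt_or_gt with hs | hs
    · have habs : |2 * s| = -(2 * s) := abs_of_neg hs
      have hr₀neg : -(c / (2 * ki)) < 0 := by
        have : 0 < c / (2 * ki) := by positivity
        linarith
      have hval : kp * (-(c / (2 * ki))) * (2 * s - ki * (-(c / (2 * ki))) - ks * Real.sign (-(c / (2 * ki)))) = kp * c ^ 2 / (4 * ki) := by
        rw [Real.sign_of_neg hr₀neg, hc', habs]
        field_simp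
        ring
      calc kp * c ^ 2 / (4 * ki) = _ := hval.symm
        _ ≤ _ := le_ciSup hbdd (-(c / (2 * ki)))
    · have habs : |2 * s| = 2 * s := abs_of_pos hs
      have hr₀pos : 0 < c / (2 * ki) := by positivity
      have hval : kp * (c / (2 * ki)) * (2 * s - ki * (c / (2 * ki)) - ks * Real.sign (c / (2 * ki))) = kp * c ^ 2 / (4 * ki) := by
        rw [Real.sign_of_pos hr₀pos, hc', habs]
        field_simp
        ring
      calc kp * c ^ 2 / (4 * ki) = _ := hval.symm
        _ ≤ _ := le_ciSup hbdd (c / (2 * ki))
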